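/- Let n ≥ 10 be a natural number, let A be the n×n tridiagonal matrix with A_{1,1} = A_{n,n} = 1, A_{i,i} = 2 for 1 < i < n, A_{i,i+1} = A_{i+1,i} = -1, and all other entries 0, let α = 1/n², and let B = (α I_n + A)^{-1}. Then for every 1 ≤ i ≤ n, we have 0.1·n ≤ B_{i,1} ≤ 20·n. -/

import Mathlib

open Matrix

/-- The `n × n` tridiagonal matrix with `A 1 1 = A n n = 1`, diagonal `2` otherwise,
off-diagonal entries `-1`, and all other entries `0` (0-indexed in Lean). -/
noncomputable def triA (n : ℕ) : Matrix (Fin n) (Fin n) ℝ :=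
  Matrix.of fun i j =>
    if i = j then (if (i : ℕ) = 0 ∨ (i : ℕ) = n - 1 then 1 else 2)
    else if (i : ℕ) + 1 = (j : ℕ) ∨ (j : ℕ) + 1 = (i : ℕ) then -1 else 0

/-- `B = (α I + A)⁻¹`. -/
noncomputable def Bmat (n : ℕ) (α : ℝ) : Matrix (Fin n) (Fin n) ℝ :=
  (α • (1 : Matrix (Fin n) (Fin n) ℝ) + triA n)⁻¹

noncomputable def dseq (α : ℝ) : ℕ → ℝ
  | 0 => 1
  | 1 => 1 + α
  | (m+2) => (2+α) * dseq α (m+1) - dseq α m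

lemma dseq_zero (α : ℝ) : dseq α 0 = 1 := rfl
lemma dseq_one (α : ℝ) : dseq α 1 = 1 + α := rfl
lemma dseq_rec (α : ℝ) (m : ℕ) :
    dseq α (m+2) = (2+α) * dseq α (m+1) - dseq α m := rfl

noncomputable def Dd (n : ℕ) (α : ℝ) : ℝ :=
  (1+α) * dseq α (n-1) - dseq α (n-2)

lemma trisum {n : ℕ} (α : ℝ) (x : ℕ → ℝ) (i : Fin n) :
    (∑ j : Fin n, ((α • (1 : Matrix (Fin n) (Fin n) ℝ) + triA n) i j * x (j : ℕ)))
      = ((if (i:ℕ) = 0 ∨ (i:ℕ) = n - 1 then (1:ℝ) else 2) + α) * x (i:ℕ)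
        - (if (i:ℕ) = 0 then 0 else x ((i:ℕ) - 1))
        - (if (i:ℕ) + 1 = n then 0 else x ((i:ℕ) + 1)) := by
  have hsplit : ∀ j : Fin n,
      (α • (1 : Matrix (Fin n) (Fin n) ℝ) + triA n) i j * x (j:ℕ)
        = (if j = i then ((if (i:ℕ) = 0 ∨ (i:ℕ) = n - 1 then (1:ℝ) else 2) + α) * x (i:ℕ) else 0)
          + ((if (j:ℕ) + 1 = (i:ℕ) then -x (j:ℕ) else 0)
          + (if (i:ℕ) + 1 = (j:ℕ) then -x (j:ℕ) else 0)) := by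
    intro j
    rcases i with ⟨a, ha⟩
    rcases j with ⟨b, hb⟩
    simp only [Matrix.add_apply, Matrix.smul_apply, Matrix.one_apply, triA, Matrix.of_apply,
      smul_eq_mul, Fin.mk.injEq]
    by_cases hab : a = b
    · subst hab
      split_ifs <;> first | ring1 | (exfalso; omega)
    · split_ifs <;> first | ring1 | (exfalso; omega)
  rw [Finset.sum_congr rfl (fun j _ => hsplit j), Finset.sum_add_distrib,
    Finset.sum_add_distrib, Finset.sum_ite_eq' Finset.univ i, if_pos (Finset.mem_univ i)]
  have hS2 : (∑ j : Fin n, (if (j:ℕ) + 1 = (i:ℕ) then -x (j:ℕ) else 0))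
      = -(if (i:ℕ) = 0 then 0 else x ((i:ℕ) - 1)) := by
    by_cases hi0 : (i:ℕ) = 0
    · rw [if_pos hi0, Finset.sum_congr rfl (fun j _ => if_neg (by omega)),
        Finset.sum_const_zero, neg_zero]
    · have hlt : (i:ℕ) - 1 < n := by have := i.isLt; omega
      have hc : ∀ j : Fin n, (if (j:ℕ) + 1 = (i:ℕ) then -x (j:ℕ) else 0)
          = (if j = (⟨(i:ℕ)-1, hlt⟩ : Fin n) then -x ((i:ℕ)-1) else 0) := by
        intro j
        by_cases h : (j:ℕ) + 1 = (i:ℕ)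
        · rw [if_pos h, if_pos (Fin.ext (show (j:ℕ) = (i:ℕ)-1 by omega)),
            show (j:ℕ) = (i:ℕ)-1 by omega]
        · rw [if_neg h, if_neg (fun hj => h (by subst hj; show (i:ℕ)-1+1 = (i:ℕ); omega))]
      rw [Finset.sum_congr rfl (fun j _ => hc j), Finset.sum_ite_eq' Finset.univ,
        if_pos (Finset.mem_univ _), if_neg hi0]
  have hS3 : (∑ j : Fin n, (if (i:ℕ) + 1 = (j:ℕ) then -x (j:ℕ) else 0))
      = -(if (i:ℕ) + 1 = n then 0 else x ((i:ℕ) + 1)) := by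
    by_cases hin : (i:ℕ) + 1 = n
    · rw [if_pos hin, Finset.sum_congr rfl
        (fun j _ => if_neg (by have := j.isLt; omega)), Finset.sum_const_zero, neg_zero]
    · have hlt : (i:ℕ) + 1 < n := by have := i.isLt; omega
      have hc : ∀ j : Fin n, (if (i:ℕ) + 1 = (j:ℕ) then -x (j:ℕ) else 0)
          = (if j = (⟨(i:ℕ)+1, hlt⟩ : Fin n) then -x ((i:ℕ)+1) else 0) := by
        intro j
        by_cases h : (i:ℕ) + 1 = (j:ℕ)
        · rw [if_pos h, if_pos (Fin.ext (show (j:ℕ) = (i:ℕ)+1 by omega)),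
            show (j:ℕ) = (i:ℕ)+1 by omega]
        · rw [if_neg h, if_neg (fun hj => h (by subst hj; rfl))]
      rw [Finset.sum_congr rfl (fun j _ => hc j), Finset.sum_ite_eq' Finset.univ,
        if_pos (Finset.mem_univ _), if_neg hin]
  rw [hS2, hS3]; ring

lemma wron (n : ℕ) (α : ℝ) (hn : 2 ≤ n) :
    ∀ a b : ℕ, a + b = n - 2 →
      dseq α (a+1) * dseq α (b+1) - dseq α a * dseq α b = Dd n α := by
  intro a
  induction a with
  | zero =>
    intro b hb
    have hb' : b = n - 2 := by omega
    subst hb'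
    rw [show n - 2 + 1 = n - 1 by omega, Dd, dseq_zero, dseq_one]
    ring
  | succ a ih =>
    intro b hb
    have h := ih (b+1) (by omega)
    rw [dseq_rec] at h
    rw [show a + 1 + 1 = a + 2 from rfl, dseq_rec]
    linear_combination h

noncomputable def C0 (n : ℕ) (α : ℝ) : Matrix (Fin n) (Fin n) ℝ :=
  Matrix.of fun i j =>
    dseq α (min (i:ℕ) (j:ℕ)) * dseq α (n - 1 - max (i:ℕ) (j:ℕ))

lemma key (n : ℕ) (hn : 2 ≤ n) (α : ℝ) :
    (α • (1 : Matrix (Fin n) (Fin n) ℝ) + triA n) * C0 n α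
      = Dd n α • (1 : Matrix (Fin n) (Fin n) ℝ) := by
  ext i k
  rw [Matrix.mul_apply]
  have hx := trisum (n := n) α
    (fun m => dseq α (min m (k:ℕ)) * dseq α (n - 1 - max m (k:ℕ))) i
  simp only [C0, Matrix.of_apply]
  rw [hx, Matrix.smul_apply, Matrix.one_apply, smul_eq_mul, mul_ite, mul_one, mul_zero]
  simp only [Fin.ext_iff]
  have hi := i.isLt
  have hk := k.isLt
  rcases lt_trichotomy (i:ℕ) (k:ℕ) with hlt | heq | hgt
  · -- i < k
    rw [if_neg (show ¬((i:ℕ) = (k:ℕ)) by omega)]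
    rw [min_eq_left (by omega : (i:ℕ) ≤ (k:ℕ)), max_eq_right (by omega : (i:ℕ) ≤ (k:ℕ)),
      if_neg (by omega : ¬ (i:ℕ) + 1 = n),
      min_eq_left (by omega : (i:ℕ)+1 ≤ (k:ℕ)), max_eq_right (by omega : (i:ℕ)+1 ≤ (k:ℕ))]
    by_cases hi0 : (i:ℕ) = 0
    · rw [if_pos hi0, if_pos (Or.inl hi0), hi0, dseq_zero, dseq_one]
      ring
    · rw [if_neg hi0, if_neg (by omega : ¬((i:ℕ) = 0 ∨ (i:ℕ) = n-1)),
        min_eq_left (by omega : (i:ℕ)-1 ≤ (k:ℕ)), max_eq_right (by omega : (i:ℕ)-1 ≤ (k:ℕ))]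
      obtain ⟨p, hp⟩ : ∃ p, (i:ℕ) = p + 1 := ⟨(i:ℕ)-1, by omega⟩
      rw [hp, show p + 1 - 1 = p from rfl, show p + 1 + 1 = p + 2 from rfl, dseq_rec]
      ring
  · -- i = k
    rw [if_pos heq, heq]
    rw [min_self, max_self]
    by_cases hi0 : (k:ℕ) = 0
    · rw [if_pos (Or.inl hi0), if_pos hi0, if_neg (by omega : ¬ (k:ℕ)+1 = n),
        max_eq_left (by omega : (k:ℕ) ≤ (k:ℕ)+1), min_eq_right (by omega : (k:ℕ) ≤ (k:ℕ)+1),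
        hi0, dseq_zero, Dd, show n - 1 - (0+1) = n - 2 by omega, Nat.sub_zero]
      ring
    · by_cases hiN : (k:ℕ) = n - 1
      · rw [if_pos (Or.inr hiN), if_neg hi0, if_pos (by omega : (k:ℕ)+1 = n),
          min_eq_left (by omega : (k:ℕ)-1 ≤ (k:ℕ)), max_eq_right (by omega : (k:ℕ)-1 ≤ (k:ℕ)),
          show n - 1 - (k:ℕ) = 0 by omega, show (k:ℕ)-1 = n-2 by omega,
          show (k:ℕ) = n-1 from hiN, dseq_zero, Dd]
        ring
      · rw [if_neg (by omega : ¬((k:ℕ) = 0 ∨ (k:ℕ) = n-1)), if_neg hi0,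
          if_neg (by omega : ¬ (k:ℕ)+1 = n),
          min_eq_left (by omega : (k:ℕ)-1 ≤ (k:ℕ)), max_eq_right (by omega : (k:ℕ)-1 ≤ (k:ℕ)),
          min_eq_right (by omega : (k:ℕ) ≤ (k:ℕ)+1), max_eq_left (by omega : (k:ℕ) ≤ (k:ℕ)+1)]
        have hw := wron n α hn (k:ℕ) (n - 2 - (k:ℕ)) (by omega)
        rw [show n - 2 - (k:ℕ) + 1 = n - 1 - (k:ℕ) by omega] at hw
        obtain ⟨p, hp⟩ : ∃ p, (k:ℕ) = p + 1 := ⟨(k:ℕ)-1, by omega⟩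
        rw [hp] at hw ⊢
        rw [show p + 1 - 1 = p by omega,
          show n - 1 - (p + 1 + 1) = n - 2 - (p + 1) by omega]
        rw [show p + 1 + 1 = p + 2 by omega, dseq_rec] at hw
        linear_combination hw
  · -- i > k
    rw [if_neg (show ¬((i:ℕ) = (k:ℕ)) by omega)]
    rw [min_eq_right (by omega : (k:ℕ) ≤ (i:ℕ)), max_eq_left (by omega : (k:ℕ) ≤ (i:ℕ)),
      min_eq_right (by omega : (k:ℕ) ≤ (i:ℕ)-1), max_eq_left (by omega : (k:ℕ) ≤ (i:ℕ)-1),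
      if_neg (by omega : ¬ (i:ℕ) = 0)]
    by_cases hiN : (i:ℕ) = n - 1
    · rw [if_pos (Or.inr hiN), if_pos (by omega : (i:ℕ)+1 = n),
        show n - 1 - (i:ℕ) = 0 by omega, show n - 1 - ((i:ℕ)-1) = 1 by omega,
        dseq_zero, dseq_one]
      ring
    · rw [if_neg (by omega : ¬((i:ℕ) = 0 ∨ (i:ℕ) = n-1)),
        if_neg (by omega : ¬ (i:ℕ)+1 = n),
        min_eq_right (by omega : (k:ℕ) ≤ (i:ℕ)+1), max_eq_left (by omega : (k:ℕ) ≤ (i:ℕ)+1)]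
      obtain ⟨q, hq⟩ : ∃ q, n - 1 - (i:ℕ) = q + 1 := ⟨n - 2 - (i:ℕ), by omega⟩
      rw [hq, show n - 1 - ((i:ℕ)-1) = q + 2 by omega, show n - 1 - ((i:ℕ)+1) = q by omega,
        dseq_rec]
      ring

lemma dseq_basic (α : ℝ) (hα : 0 ≤ α) (m : ℕ) :
    1 ≤ dseq α m ∧ dseq α m ≤ dseq α (m+1) ∧
      ((m:ℝ)+1) * α ≤ dseq α (m+1) - dseq α m := by
  induction m with
  | zero =>
    rw [dseq_zero, dseq_one]
    refine ⟨le_refl _, by linarith, by norm_num⟩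
  | succ m ih =>
    obtain ⟨h1, h2, h3⟩ := ih
    have h1' : 1 ≤ dseq α (m+1) := le_trans h1 h2
    refine ⟨h1', ?_, ?_⟩
    · rw [show m+1+1 = m+2 by omega, dseq_rec]
      nlinarith [mul_nonneg hα (by linarith : (0:ℝ) ≤ dseq α (m+1))]
    · rw [show m+1+1 = m+2 by omega, dseq_rec]
      push_cast
      nlinarith [mul_le_mul_of_nonneg_left h1' hα]

lemma dseq_diff_le (α : ℝ) (hα : 0 ≤ α) (m : ℕ) :
    dseq α (m+1) - dseq α m ≤ ((m:ℝ)+1) * α * dseq α (m+1) := by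
  induction m with
  | zero =>
    rw [dseq_zero, dseq_one]
    nlinarith [sq_nonneg α]
  | succ m ih =>
    obtain ⟨h1, h2, -⟩ := dseq_basic α hα (m+1)
    rw [show m+1+1 = m+2 by omega] at h2 ⊢
    rw [dseq_rec]
    push_cast
    have hd2 : dseq α (m+2) = (2+α) * dseq α (m+1) - dseq α m := dseq_rec α m
    nlinarith [mul_nonneg (mul_nonneg (by positivity : (0:ℝ) ≤ (m:ℝ)+1+1) hα)
      (by linarith : (0:ℝ) ≤ dseq α (m+2) - dseq α (m+1)),
      mul_nonneg hα (by linarith : (0:ℝ) ≤ dseq α (m+1))]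

lemma dseq_ratio (u : ℝ) (hu0 : 0 < u) (hu1 : u ≤ 1) (m : ℕ) :
    dseq (u^2) (m+1) ≤ (1+2*u) * dseq (u^2) m := by
  induction m with
  | zero =>
    rw [dseq_zero, dseq_one]
    nlinarith
  | succ m ih =>
    have hα : (0:ℝ) ≤ u^2 := sq_nonneg u
    obtain ⟨h1, h2, -⟩ := dseq_basic (u^2) hα m
    have h1' : 1 ≤ dseq (u^2) (m+1) := le_trans h1 h2
    rw [show m+1+1 = m+2 by omega, dseq_rec]
    nlinarith [mul_le_mul_of_nonneg_left ih (sq_nonneg (1-u)),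
      mul_nonneg (mul_nonneg (sq_nonneg u) (by linarith : (0:ℝ) ≤ 3 - 2*u))
        (by linarith : (0:ℝ) ≤ dseq (u^2) m)]

lemma dseq_pow (u : ℝ) (hu0 : 0 < u) (hu1 : u ≤ 1) (m : ℕ) :
    dseq (u^2) m ≤ (1+2*u)^m := by
  induction m with
  | zero => rw [dseq_zero, pow_zero]
  | succ m ih =>
    calc dseq (u^2) (m+1) ≤ (1+2*u) * dseq (u^2) m := dseq_ratio u hu0 hu1 m
    _ ≤ (1+2*u) * (1+2*u)^m := by nlinarith
    _ = (1+2*u)^(m+1) := by ring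

lemma dseq_upper (n : ℕ) (hn : 10 ≤ n) (m : ℕ) (hm : m ≤ n) :
    dseq (((n:ℝ))⁻¹^2) m ≤ 7.39 := by
  have hn' : (10:ℝ) ≤ (n:ℝ) := by exact_mod_cast hn
  have hnpos : (0:ℝ) < (n:ℝ) := by linarith
  set u : ℝ := ((n:ℝ))⁻¹ with hu
  have hu0 : 0 < u := by positivity
  have hu1 : u ≤ 1 := by rw [hu]; rw [inv_le_one_iff₀]; right; linarith
  have hnu : (n:ℝ) * u = 1 := mul_inv_cancel₀ (ne_of_gt hnpos)
  calc dseq (u^2) m ≤ (1+2*u)^m := dseq_pow u hu0 hu1 m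
  _ ≤ (1+2*u)^n := by
      apply pow_le_pow_right₀ (by linarith) hm
  _ ≤ (Real.exp (2*u))^n := by
      apply pow_le_pow_left₀ (by linarith) _ n
      have := Real.add_one_le_exp (2*u)
      linarith
  _ = Real.exp ((n:ℝ) * (2*u)) := (Real.exp_nat_mul _ n).symm
  _ = Real.exp 2 := by
      rw [show (n:ℝ) * (2*u) = 2 * ((n:ℝ) * u) by ring, hnu, mul_one]
  _ ≤ 7.39 := by
      rw [show (2:ℝ) = 1 + 1 by norm_num, Real.exp_add]
      nlinarith [Real.exp_one_lt_d9, Real.exp_pos 1]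

lemma Dd_bounds (n : ℕ) (hn : 10 ≤ n) :
    (n:ℝ)⁻¹ ≤ Dd n (((n:ℝ))⁻¹^2) ∧ Dd n (((n:ℝ))⁻¹^2) ≤ 7.39 * (n:ℝ)⁻¹ := by
  have hn' : (10:ℝ) ≤ (n:ℝ) := by exact_mod_cast hn
  have hnpos : (0:ℝ) < (n:ℝ) := by linarith
  set u : ℝ := ((n:ℝ))⁻¹ with hu
  have hu0 : 0 < u := by positivity
  have hnu : (n:ℝ) * u = 1 := mul_inv_cancel₀ (ne_of_gt hnpos)
  set α : ℝ := u^2 with hαdef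
  have hα : (0:ℝ) ≤ α := sq_nonneg u
  obtain ⟨p, hp⟩ : ∃ p, n = p + 2 := ⟨n-2, by omega⟩
  have hDd : Dd n α = (1+α) * dseq α (p+1) - dseq α p := by
    rw [Dd, hp, show p+2-1 = p+1 by omega, show p+2-2 = p by omega]
  obtain ⟨h1, h2, h3⟩ := dseq_basic α hα p
  have h1' : 1 ≤ dseq α (p+1) := le_trans h1 h2
  have hdiff : dseq α (p+1) - dseq α p ≤ ((p:ℝ)+1) * α * dseq α (p+1) :=
    dseq_diff_le α hα p
  have hcast : ((p:ℝ)+2) = (n:ℝ) := by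
    rw [hp]; push_cast; ring
  have hpa : ((p:ℝ)+2) * α = u := by
    rw [hcast, hαdef, sq, ← mul_assoc, hnu, one_mul]
  constructor
  · -- lower bound
    rw [hDd]
    nlinarith [mul_le_mul_of_nonneg_left h1' hα]
  · -- upper bound
    rw [hDd]
    have hup : dseq α (p+1) ≤ 7.39 := by
      rw [hαdef, hu]
      exact dseq_upper n hn (p+1) (by omega)
    nlinarith [mul_nonneg hα (by linarith : (0:ℝ) ≤ dseq α (p+1)),
      mul_le_mul_of_nonneg_left hup (mul_nonneg (by positivity : (0:ℝ) ≤ ((p:ℝ)+2)) hα)]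

lemma Bmat_eq (n : ℕ) (hn : 10 ≤ n) :
    Bmat n (((n:ℝ)^2)⁻¹) = (Dd n (((n:ℝ)^2)⁻¹))⁻¹ • C0 n (((n:ℝ)^2)⁻¹) := by
  have hα : ((n:ℝ)^2)⁻¹ = ((n:ℝ)⁻¹)^2 := (inv_pow _ _).symm
  have hDpos : 0 < Dd n (((n:ℝ)^2)⁻¹) := by
    rw [hα]
    have h := (Dd_bounds n hn).1
    have : (0:ℝ) < (n:ℝ)⁻¹ := by positivity
    linarith
  rw [Bmat]
  apply Matrix.inv_eq_right_inv
  rw [Matrix.mul_smul, key n (by omega) _, smul_smul,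
    inv_mul_cancel₀ (ne_of_gt hDpos), one_smul]

/-- for `n ≥ 10`, `α = 1/n²`, `B = (α I + A)⁻¹`, every entry of the
first column of `B` is between `0.1 n` and `20 n`. -/
theorem stmt_0 (n : ℕ) (hn : 10 ≤ n) (i : Fin n) :
    (0.1 : ℝ) * n ≤ Bmat n (((n : ℝ) ^ 2)⁻¹) i ⟨0, by omega⟩ ∧
      Bmat n (((n : ℝ) ^ 2)⁻¹) i ⟨0, by omega⟩ ≤ 20 * n := by
  have hα : ((n:ℝ)^2)⁻¹ = ((n:ℝ)⁻¹)^2 := (inv_pow _ _).symm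
  have hn' : (10:ℝ) ≤ (n:ℝ) := by exact_mod_cast hn
  have hnpos : (0:ℝ) < (n:ℝ) := by linarith
  have hupos : (0:ℝ) < (n:ℝ)⁻¹ := by positivity
  obtain ⟨hD1, hD2⟩ := Dd_bounds n hn
  have hDpos : 0 < Dd n (((n:ℝ)⁻¹)^2) := lt_of_lt_of_le hupos hD1
  have hentry : Bmat n (((n:ℝ)^2)⁻¹) i ⟨0, by omega⟩
      = (Dd n (((n:ℝ)⁻¹)^2))⁻¹ * dseq (((n:ℝ)⁻¹)^2) (n - 1 - (i:ℕ)) := by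
    rw [Bmat_eq n hn, Matrix.smul_apply, smul_eq_mul, hα]
    congr 1
    show dseq _ (min (i:ℕ) ((⟨0, by omega⟩ : Fin n) : ℕ)) *
      dseq _ (n - 1 - max (i:ℕ) ((⟨0, by omega⟩ : Fin n) : ℕ)) = _
    rw [show ((⟨0, by omega⟩ : Fin n) : ℕ) = 0 from rfl, Nat.min_zero, Nat.max_zero,
      dseq_zero, one_mul]
  have hd1 : 1 ≤ dseq (((n:ℝ)⁻¹)^2) (n - 1 - (i:ℕ)) :=
    (dseq_basic _ (sq_nonneg _) _).1
  have hd2 : dseq (((n:ℝ)⁻¹)^2) (n - 1 - (i:ℕ)) ≤ 7.39 :=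
    dseq_upper n hn _ (by omega)
  rw [hentry]
  have hnu : (n:ℝ) * (n:ℝ)⁻¹ = 1 := mul_inv_cancel₀ (ne_of_gt hnpos)
  constructor
  · rw [inv_mul_eq_div, le_div_iff₀ hDpos]
    nlinarith [mul_le_mul_of_nonneg_left hD2 (le_of_lt hnpos)]
  · rw [inv_mul_eq_div, div_le_iff₀ hDpos]
    nlinarith [mul_le_mul_of_nonneg_left hD1 (le_of_lt hnpos)]
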